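/- A matrix N ∈ S₂(ℤ) satisfies det N = −1 if and only if there exist A in the subgroup of GL₂(ℤ) generated by r₋₁, r₀, r₁, a sign ε ∈ {1, −1}, and i ∈ {−1, 0, 1} such that N = ε · A αᵢ Aᵀ. In other words, the real roots of F (the Weyl conjugates of the simple roots and their negatives) are exactly the elements of S₂(ℤ) of determinant −1. -/

import Mathlib

open Matrix

/-- The simple root `α₋₁` of `F`. -/
def αm : Matrix (Fin 2) (Fin 2) ℤ := !![1, 0; 0, -1]

/-- The simple root `α₀` of `F`. -/
def α0 : Matrix (Fin 2) (Fin 2) ℤ := !![-1, -1; -1, 0]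

/-- The simple root `α₁` of `F`. -/
def α1 : Matrix (Fin 2) (Fin 2) ℤ := !![0, 1; 1, 0]

/-- The simple reflection `r₋₁` as an element of `GL₂(ℤ)`. -/
def um : GL (Fin 2) ℤ := ⟨!![0, 1; 1, 0], !![0, 1; 1, 0], by decide, by decide⟩

/-- The simple reflection `r₀` as an element of `GL₂(ℤ)`. -/
def u0 : GL (Fin 2) ℤ := ⟨!![-1, 1; 0, 1], !![-1, 1; 0, 1], by decide, by decide⟩

/-- The simple reflection `r₁` as an element of `GL₂(ℤ)`. -/
def u1 : GL (Fin 2) ℤ := ⟨!![1, 0; 0, -1], !![1, 0; 0, -1], by decide, by decide⟩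



abbrev G2 : Subgroup (GL (Fin 2) ℤ) := Subgroup.closure {um, u0, u1}

lemma um_mem : um ∈ G2 := Subgroup.subset_closure (by simp)
lemma u0_mem : u0 ∈ G2 := Subgroup.subset_closure (by simp)
lemma u1_mem : u1 ∈ G2 := Subgroup.subset_closure (by simp)

/-- lower unipotent [[1,0],[t,1]] as a GL element -/
def Lgl (t : ℤ) : GL (Fin 2) ℤ :=
  ⟨!![1,0;t,1], !![1,0;-t,1], by ext i j; fin_cases i <;> fin_cases j <;>
    simp [Matrix.mul_apply, Fin.sum_univ_two], by ext i j; fin_cases i <;> fin_cases j <;>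
    simp [Matrix.mul_apply, Fin.sum_univ_two]⟩

lemma Lgl_one_mem : Lgl 1 ∈ G2 := by
  have h : Lgl 1 = um*((u1*um)^2*u0*u1)*um := by
    apply Units.ext; decide
  rw [h]
  exact mul_mem (mul_mem um_mem (mul_mem (mul_mem (pow_mem (mul_mem u1_mem um_mem) 2) u0_mem) u1_mem)) um_mem

lemma Lgl_add (s t : ℤ) : Lgl (s+t) = Lgl s * Lgl t := by
  apply Units.ext
  show (!![1,0;s+t,1] : Matrix (Fin 2) (Fin 2) ℤ) = !![1,0;s,1] * !![1,0;t,1]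
  ext i j; fin_cases i <;> fin_cases j <;> simp [Matrix.mul_apply, Fin.sum_univ_two]

lemma Lgl_mem (t : ℤ) : Lgl t ∈ G2 := by
  induction t using Int.induction_on with
  | zero =>
    have : Lgl 0 = 1 := by apply Units.ext; decide
    rw [this]; exact one_mem _
  | succ n ih =>
    rw [show ((n:ℤ)+1) = (n:ℤ)+1 from rfl, Lgl_add]
    exact mul_mem ih Lgl_one_mem
  | pred n ih =>
    have : Lgl (-(n:ℤ)-1) = Lgl (-n) * (Lgl 1)⁻¹ := by
      rw [eq_mul_inv_iff_mul_eq, ← Lgl_add]; ring_nf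
    rw [this]
    exact mul_mem ih (inv_mem Lgl_one_mem)

def Good (N : Matrix (Fin 2) (Fin 2) ℤ) : Prop :=
  ∃ A ∈ G2, ∃ ε ∈ ({1, -1} : Set ℤ),
    ∃ α ∈ ({αm, α0, α1} : Set (Matrix (Fin 2) (Fin 2) ℤ)),
      N = ε • ((A : Matrix (Fin 2) (Fin 2) ℤ) * α * ((A : Matrix (Fin 2) (Fin 2) ℤ))ᵀ)

lemma good_neg {N : Matrix (Fin 2) (Fin 2) ℤ} (h : Good N) : Good (-N) := by
  obtain ⟨A, hA, ε, hε, α, hα, hEq⟩ := h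
  refine ⟨A, hA, -ε, ?_, α, hα, by rw [hEq, neg_smul]⟩
  simp only [Set.mem_insert_iff, Set.mem_singleton_iff] at hε ⊢
  omega

lemma good_conj {N : Matrix (Fin 2) (Fin 2) ℤ} {B : GL (Fin 2) ℤ} (hB : B ∈ G2)
    (h : Good N) : Good ((B : Matrix (Fin 2) (Fin 2) ℤ) * N * (B : Matrix (Fin 2) (Fin 2) ℤ)ᵀ) := by
  obtain ⟨A, hA, ε, hε, α, hα, hEq⟩ := h
  refine ⟨B * A, mul_mem hB hA, ε, hε, α, hα, ?_⟩
  rw [hEq]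
  show _ = ε • (((B*A : GL (Fin 2) ℤ) : Matrix (Fin 2) (Fin 2) ℤ) * α * _)
  rw [Units.val_mul, Matrix.transpose_mul]
  simp only [Matrix.mul_smul, Matrix.smul_mul, Matrix.mul_assoc]

-- conjugation by Lgl t
lemma conj_L (t a b c : ℤ) :
    (Lgl t : Matrix (Fin 2) (Fin 2) ℤ) * !![a,b;b,c] * (Lgl t : Matrix (Fin 2) (Fin 2) ℤ)ᵀ
      = !![a, b + t*a; b + t*a, c + 2*t*b + t^2*a] := by
  show (!![1,0;t,1] : Matrix (Fin 2) (Fin 2) ℤ) * _ * _ = _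
  ext i j; fin_cases i <;> fin_cases j <;>
    simp [Lgl, Matrix.mul_apply, Fin.sum_univ_two, Matrix.transpose] <;> ring

lemma conj_um (a b c : ℤ) :
    (um : Matrix (Fin 2) (Fin 2) ℤ) * !![a,b;b,c] * (um : Matrix (Fin 2) (Fin 2) ℤ)ᵀ
      = !![c,b;b,a] := by
  show (!![0,1;1,0] : Matrix (Fin 2) (Fin 2) ℤ) * _ * _ = _
  ext i j; fin_cases i <;> fin_cases j <;>
    simp [um, Matrix.mul_apply, Fin.sum_univ_two, Matrix.transpose]

lemma good_of_conj {a b c a' b' c' : ℤ} {B : GL (Fin 2) ℤ} (hB : B ∈ G2)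
    (hc : (B : Matrix (Fin 2) (Fin 2) ℤ) * !![a,b;b,c] * (B : Matrix (Fin 2) (Fin 2) ℤ)ᵀ = !![a',b';b',c'])
    (h : Good !![a,b;b,c]) : Good !![a',b';b',c'] := hc ▸ good_conj hB h

lemma mem_αm : αm ∈ ({αm, α0, α1} : Set (Matrix (Fin 2) (Fin 2) ℤ)) := Or.inl rfl
lemma mem_α1 : α1 ∈ ({αm, α0, α1} : Set (Matrix (Fin 2) (Fin 2) ℤ)) := Or.inr (Or.inr rfl)
lemma mem1 : (1:ℤ) ∈ ({1,-1} : Set ℤ) := Or.inl rfl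
lemma memn1 : (-1:ℤ) ∈ ({1,-1} : Set ℤ) := Or.inr rfl

lemma g_am : Good !![1,0;0,-1] := ⟨1, one_mem _, 1, mem1, αm, mem_αm, by decide⟩
lemma g_amn : Good !![-1,0;0,1] := ⟨1, one_mem _, -1, memn1, αm, mem_αm, by decide⟩
lemma g_a1 : Good !![0,1;1,0] := ⟨1, one_mem _, 1, mem1, α1, mem_α1, by decide⟩
lemma g_a1n : Good !![0,-1;-1,0] := ⟨1, one_mem _, -1, memn1, α1, mem_α1, by decide⟩

lemma T_mem : (u1*um)^2*u0*u1 ∈ G2 :=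
  mul_mem (mul_mem (pow_mem (mul_mem u1_mem um_mem) 2) u0_mem) u1_mem

lemma g_011 : Good !![0,1;1,1] :=
  ⟨(u1*um)^2*u0*u1*um, mul_mem T_mem um_mem, 1, mem1, αm, mem_αm, by decide⟩

lemma g_0n11 : Good !![0,-1;-1,1] :=
  ⟨(Lgl 1)⁻¹ * ((u1*um)^2*u0*u1), mul_mem (inv_mem Lgl_one_mem) T_mem, 1, mem1, αm, mem_αm,
    by decide⟩

/-- undo an `Lgl t` conjugation -/
lemma good_L_back (t a b c : ℤ)
    (h : Good !![a, b + t*a; b + t*a, c + 2*t*b + t^2*a]) : Good !![a,b;b,c] := by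
  refine good_of_conj (Lgl_mem (-t)) ?_ h
  rw [conj_L]
  ext i j
  fin_cases i <;> fin_cases j <;> simp <;> ring

lemma keyA0 (b c : ℤ) (hb : b*b = 1) : Good !![0,b;b,c] := by
  have hb' : b = 1 ∨ b = -1 := mul_self_eq_one_iff.mp hb
  set t : ℤ := -(b*(c/2)) with ht
  have h2 : c + 2*t*b + t^2*0 = c % 2 := by
    have h3 : c % 2 = c - 2 * (c/2) := by omega
    rcases hb' with h|h <;> rw [h] at ht ⊢ <;> rw [ht] <;> ring_nf <;> omega
  have h1 : b + t*0 = b := by ring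
  have key : Good !![0, b + t*0; b + t*0, c + 2*t*b + t^2*0] := by
    rw [h1, h2]
    have hr : c % 2 = 0 ∨ c % 2 = 1 := by omega
    rcases hb' with h|h <;> rcases hr with h'|h' <;> rw [h, h']
    · exact g_a1
    · exact g_011
    · exact g_a1n
    · exact g_0n11
  exact good_L_back t 0 b c key

lemma exists_t (a b : ℤ) (ha : a ≠ 0) : ∃ t, 0 ≤ b + t*a ∧ b + t*a < |a| := by
  rcases lt_or_gt_of_ne ha with h|h
  · have h1 : b % (-a) = b - (-a) * (b / (-a)) := by rw [Int.emod_def]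
    have h4 : (-a) * (b / (-a)) = -((b / (-a)) * a) := by ring
    have h2 : 0 ≤ b % (-a) := Int.emod_nonneg b (by omega)
    have h5 : b % (-a) < -a := Int.emod_lt_of_pos b (by omega)
    have h3 : |a| = -a := abs_of_neg h
    exact ⟨b / (-a), by omega, by omega⟩
  · have h1 : b % a = b - a * (b / a) := by rw [Int.emod_def]
    have h4 : a * (b / a) = -(-(b / a) * a) := by ring
    have h2 : 0 ≤ b % a := Int.emod_nonneg b (by omega)
    have h5 : b % a < a := Int.emod_lt_of_pos b h
    have h3 : |a| = a := abs_of_pos h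
    exact ⟨-(b / a), by omega, by omega⟩

lemma bound (a b' c' : ℤ) (h2 : 2 ≤ a.natAbs) (h1 : a*c' = b'*b' - 1)
    (h0 : 0 ≤ b') (hlt : b' < |a|) : c'.natAbs < a.natAbs := by
  have habs : (a.natAbs : ℤ) = |a| := Int.abs_eq_natAbs a ▸ rfl
  have hA2 : (2:ℤ) ≤ |a| := by omega
  have hup : b'*b' - 1 < |a| * |a| := by nlinarith
  have hlo : -(|a| * |a|) < b'*b' - 1 := by nlinarith
  have hmul : |a * c'| < |a| * |a| := by
    rw [h1]; exact abs_lt.mpr ⟨hlo, hup⟩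
  rw [abs_mul] at hmul
  have hfin : |c'| < |a| := by
    by_contra hcon
    push_neg at hcon
    nlinarith [abs_nonneg c', abs_nonneg a]
  have h4 : (c'.natAbs : ℤ) = |c'| := Int.abs_eq_natAbs c' ▸ rfl
  omega

lemma key : ∀ n : ℕ, ∀ a b c : ℤ, a.natAbs ≤ n → a*c - b*b = -1 → Good !![a,b;b,c] := by
  intro n
  induction n with
  | zero =>
    intro a b c ha h
    have ha0 : a = 0 := by omega
    subst ha0
    have hb : b * b = 1 := by linarith
    exact keyA0 b c hb
  | succ n ih =>
    intro a b c ha h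
    rcases Nat.lt_or_ge a.natAbs (n+1) with hlt|hge
    · exact ih a b c (by omega) h
    have haeq : a.natAbs = n + 1 := by omega
    rcases Nat.eq_zero_or_pos n with hn|hn
    · -- |a| = 1
      subst hn
      have ha1 : a = 1 ∨ a = -1 := by omega
      set t : ℤ := -b*a with ht
      have hb' : b + t*a = 0 := by rcases ha1 with h'|h' <;> rw [h'] at ht ⊢ <;> rw [ht] <;> ring
      have hc' : a * (c + 2*t*b + t^2*a) = -1 := by
        have : a * (c + 2*t*b + t^2*a) = (a*c - b*b) + (b + t*a)*(b+t*a) := by ring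
        rw [this, hb', h]; ring
      have hc'' : c + 2*t*b + t^2*a = -a := by
        rcases ha1 with h'|h' <;> rw [h'] at hc' ⊢ <;> omega
      refine good_L_back t a b c ?_
      rw [hb', hc'']
      rcases ha1 with h'|h' <;> rw [h']
      · exact g_am
      · exact g_amn
    · -- |a| ≥ 2
      have ha0 : a ≠ 0 := by omega
      obtain ⟨t, h0, hlt'⟩ := exists_t a b ha0
      set b' : ℤ := b + t*a with hb'
      set c' : ℤ := c + 2*t*b + t^2*a with hc'
      have hrel : a * c' = b' * b' - 1 := by rw [hb', hc']; linear_combination h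
      have hrel2 : c' * a - b' * b' = -1 := by linarith
      have hbd : c'.natAbs < a.natAbs := bound a b' c' (by omega) hrel h0 hlt'
      have hgood1 : Good !![c',b';b',a] := ih c' b' a (by omega) hrel2
      have hgood2 : Good !![a,b';b',c'] := good_of_conj um_mem (conj_um c' b' a) hgood1
      exact good_L_back t a b c hgood2

/-- A symmetric integer 2×2 matrix `N` has `det N = -1` iff `N = ε · A αᵢ Aᵀ` for some
`A` in the subgroup of `GL₂(ℤ)` generated by `r₋₁, r₀, r₁`, some sign `ε ∈ {1,-1}` and
some simple root `αᵢ`: the real roots of `F` are exactly the elements of `S₂(ℤ)` of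
determinant `-1`. -/
theorem stmt_4 (N : Matrix (Fin 2) (Fin 2) ℤ) (hN : N.IsSymm) :
    N.det = -1 ↔
      ∃ A ∈ Subgroup.closure {um, u0, u1}, ∃ ε ∈ ({1, -1} : Set ℤ),
        ∃ α ∈ ({αm, α0, α1} : Set (Matrix (Fin 2) (Fin 2) ℤ)),
          N = ε • ((A : Matrix (Fin 2) (Fin 2) ℤ) * α *
            ((A : Matrix (Fin 2) (Fin 2) ℤ))ᵀ) := by
  constructor
  · intro hdet
    have hsym : N 1 0 = N 0 1 := by
      conv_lhs => rw [← hN]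
      rfl
    have hmat : N = !![N 0 0, N 0 1; N 0 1, N 1 1] := by
      ext i j
      fin_cases i <;> fin_cases j <;> simp [hsym]
    rw [Matrix.det_fin_two] at hdet
    have h : N 0 0 * N 1 1 - N 0 1 * N 0 1 = -1 := by rw [← hsym] at hdet ⊢; linarith
    have := key (N 0 0).natAbs (N 0 0) (N 0 1) (N 1 1) le_rfl h
    rw [← hmat] at this
    exact this
  · rintro ⟨A, hA, ε, hε, α, hα, rfl⟩
    have hdA : ((A : Matrix (Fin 2) (Fin 2) ℤ)).det = 1 ∨ ((A : Matrix (Fin 2) (Fin 2) ℤ)).det = -1 := by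
      have hu : IsUnit ((A : Matrix (Fin 2) (Fin 2) ℤ)).det :=
        (Matrix.isUnit_iff_isUnit_det _).mp A.isUnit
      exact Int.isUnit_iff.mp hu
    have hdα : α.det = -1 := by
      rcases hα with h|h|h <;> rw [h] <;> decide
    have hε' : ε = 1 ∨ ε = -1 := hε
    rw [Matrix.det_smul, Matrix.det_mul, Matrix.det_mul, Matrix.det_transpose, hdα]
    rcases hdA with h|h <;> rw [h] <;> rcases hε' with h'|h' <;> rw [h'] <;> norm_num
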